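/- Let f be a positive semi-definite quartic form in ℝ[x,y,z] with f(1,0,0) = f(0,1,0) = f(0,0,1) = 0. Then each variable appears in f with degree at most 2, i.e., f = a x²y² + b y²z² + c z²x² + a₁ x²yz + b₁ y²xz + c₁ z²xy for some real a, b, c, a₁, b₁, c₁. -/

import Mathlib

open MvPolynomial

private lemma cubic_zero (A B C : ℝ) (h : ∀ t : ℝ, 0 ≤ A*t + B*t^2 + C*t^3) : A = 0 := by
  by_contra hA
  have hD : (0:ℝ) < 1 + |B| + |C*A| := by positivity
  set c : ℝ := 1 / (1 + |B| + |C*A|) with hc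
  have hc0 : 0 < c := by positivity
  have hc1 : c ≤ 1 := by
    rw [hc, div_le_one hD]
    nlinarith [abs_nonneg B, abs_nonneg (C*A)]
  have hkey : B*c - C*A*c^2 < 1 := by
    have h1 : B*c ≤ |B| * c := mul_le_mul_of_nonneg_right (le_abs_self B) hc0.le
    have h2 : -(C*A*c^2) ≤ |C*A| * c := by
      have ha : -(C*A) ≤ |C*A| := neg_le_abs _
      have hcc : c^2 ≤ c := by nlinarith
      nlinarith [mul_le_mul_of_nonneg_right ha (sq_nonneg c),
        mul_le_mul_of_nonneg_left hcc (abs_nonneg (C*A))]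
    have h3 : (|B| + |C*A|)*c < 1 := by
      rw [hc, mul_one_div, div_lt_one hD]; linarith
    nlinarith
  have ht := h (-A * c)
  have hA2 : 0 < A^2 := by positivity
  nlinarith [mul_pos (mul_pos hA2 hc0) (sub_pos.mpr hkey)]

private lemma cubic_zero' (A B C : ℝ) (h : ∀ t : ℝ, 0 ≤ A*t + B*t^2 + C*t^3) : C = 0 := by
  apply cubic_zero C B A
  intro t
  rcases eq_or_ne t 0 with rfl | ht0
  · simp
  · have h4 : 0 ≤ (A*(1/t) + B*(1/t)^2 + C*(1/t)^3) * t^4 :=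
      mul_nonneg (h (1/t)) (by positivity)
    have he : (A*(1/t) + B*(1/t)^2 + C*(1/t)^3) * t^4 = C*t + B*t^2 + A*t^3 := by
      field_simp; ring
    linarith [he ▸ h4]

private noncomputable def Mn (i j k : ℕ) : Fin 3 →₀ ℕ :=
  Finsupp.single 0 i + Finsupp.single 1 j + Finsupp.single 2 k

private lemma Mn_apply0 (i j k : ℕ) : Mn i j k 0 = i := by
  simp [Mn, Finsupp.single_apply]
private lemma Mn_apply1 (i j k : ℕ) : Mn i j k 1 = j := by
  simp [Mn, Finsupp.single_apply]
private lemma Mn_apply2 (i j k : ℕ) : Mn i j k 2 = k := by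
  simp [Mn, Finsupp.single_apply]

private lemma Mn_inj {i j k i' j' k' : ℕ} : Mn i j k = Mn i' j' k' ↔ i = i' ∧ j = j' ∧ k = k' := by
  constructor
  · intro h
    refine ⟨?_, ?_, ?_⟩
    · have := congrArg (fun g => g 0) h; simpa [Mn_apply0] using this
    · have := congrArg (fun g => g 1) h; simpa [Mn_apply1] using this
    · have := congrArg (fun g => g 2) h; simpa [Mn_apply2] using this
  · rintro ⟨rfl, rfl, rfl⟩; rfl

private lemma Mn_eq_monomial (i j k : ℕ) (c : ℝ) :
    C c * X 0 ^ i * X 1 ^ j * X 2 ^ k = monomial (Mn i j k) c := by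
  rw [X_pow_eq_monomial, X_pow_eq_monomial, X_pow_eq_monomial, C_mul_monomial,
    monomial_mul, monomial_mul]
  simp [Mn]

private lemma eval_Mn (p : Fin 3 → ℝ) (i j k : ℕ) (c : ℝ) :
    eval p (monomial (Mn i j k) c) = c * p 0 ^ i * p 1 ^ j * p 2 ^ k := by
  rw [← Mn_eq_monomial]
  simp [mul_assoc]

private lemma degree3 (d : Fin 3 →₀ ℕ) : d.degree = d 0 + d 1 + d 2 := by
  rw [Finsupp.degree_apply]
  rw [Finset.sum_subset (Finset.subset_univ d.support)]
  · exact Fin.sum_univ_three d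
  · intro x _ hx
    simpa using hx

private lemma ext3 (d : Fin 3 →₀ ℕ) : d = Mn (d 0) (d 1) (d 2) := by
  ext a
  fin_cases a <;> simp [Mn_apply0, Mn_apply1, Mn_apply2]

theorem stmt_6 (f : MvPolynomial (Fin 3) ℝ) (hhom : f.IsHomogeneous 4)
    (hpsd : ∀ p : Fin 3 → ℝ, 0 ≤ eval p f)
    (h1 : eval ![1, 0, 0] f = 0) (h2 : eval ![0, 1, 0] f = 0)
    (h3 : eval ![0, 0, 1] f = 0) :
    ∃ a b c a₁ b₁ c₁ : ℝ,
      f = C a * X 0 ^ 2 * X 1 ^ 2 + C b * X 1 ^ 2 * X 2 ^ 2 + C c * X 2 ^ 2 * X 0 ^ 2 +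
        C a₁ * X 0 ^ 2 * X 1 * X 2 + C b₁ * X 1 ^ 2 * X 0 * X 2 +
        C c₁ * X 2 ^ 2 * X 0 * X 1 := by
  -- the 15 possible coefficients
  set c400 := coeff (Mn 4 0 0) f
  set c310 := coeff (Mn 3 1 0) f
  set c301 := coeff (Mn 3 0 1) f
  set c220 := coeff (Mn 2 2 0) f
  set c211 := coeff (Mn 2 1 1) f
  set c202 := coeff (Mn 2 0 2) f
  set c130 := coeff (Mn 1 3 0) f
  set c121 := coeff (Mn 1 2 1) f
  set c112 := coeff (Mn 1 1 2) f
  set c103 := coeff (Mn 1 0 3) f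
  set c040 := coeff (Mn 0 4 0) f
  set c031 := coeff (Mn 0 3 1) f
  set c022 := coeff (Mn 0 2 2) f
  set c013 := coeff (Mn 0 1 3) f
  set c004 := coeff (Mn 0 0 4) f
  have hF : f = monomial (Mn 4 0 0) c400 + monomial (Mn 3 1 0) c310 + monomial (Mn 3 0 1) c301
      + monomial (Mn 2 2 0) c220 + monomial (Mn 2 1 1) c211 + monomial (Mn 2 0 2) c202
      + monomial (Mn 1 3 0) c130 + monomial (Mn 1 2 1) c121 + monomial (Mn 1 1 2) c112
      + monomial (Mn 1 0 3) c103 + monomial (Mn 0 4 0) c040 + monomial (Mn 0 3 1) c031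
      + monomial (Mn 0 2 2) c022 + monomial (Mn 0 1 3) c013 + monomial (Mn 0 0 4) c004 := by
    ext d
    by_cases h4 : d 0 + d 1 + d 2 = 4
    · obtain ⟨i, j, k, hijk, rfl⟩ : ∃ i j k, i + j + k = 4 ∧ d = Mn i j k :=
        ⟨d 0, d 1, d 2, h4, ext3 d⟩
      have hi : i ≤ 4 := by omega
      have hj : j ≤ 4 := by omega
      have hk : k ≤ 4 := by omega
      interval_cases i <;> interval_cases j <;> interval_cases k <;>
        first
          | omega
          | (simp [coeff_add, coeff_monomial, Mn_inj] <;> rfl)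
    · have hf0 : coeff d f = 0 := by
        apply hhom.coeff_eq_zero
        rw [degree3]; exact h4
      have hne : ∀ i j k : ℕ, i + j + k = 4 → Mn i j k ≠ d := by
        intro i j k hs he
        apply h4
        rw [← he, Mn_apply0, Mn_apply1, Mn_apply2, hs]
      rw [hf0]
      simp only [coeff_add, coeff_monomial]
      rw [if_neg (hne 4 0 0 (by norm_num)), if_neg (hne 3 1 0 (by norm_num)),
        if_neg (hne 3 0 1 (by norm_num)), if_neg (hne 2 2 0 (by norm_num)),
        if_neg (hne 2 1 1 (by norm_num)), if_neg (hne 2 0 2 (by norm_num)),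
        if_neg (hne 1 3 0 (by norm_num)), if_neg (hne 1 2 1 (by norm_num)),
        if_neg (hne 1 1 2 (by norm_num)), if_neg (hne 1 0 3 (by norm_num)),
        if_neg (hne 0 4 0 (by norm_num)), if_neg (hne 0 3 1 (by norm_num)),
        if_neg (hne 0 2 2 (by norm_num)), if_neg (hne 0 1 3 (by norm_num)),
        if_neg (hne 0 0 4 (by norm_num))]
      norm_num
  -- pure quartic coefficients vanish
  have e400 : c400 = 0 := by
    rw [hF] at h1; simpa [eval_Mn] using h1
  have e040 : c040 = 0 := by
    rw [hF] at h2; simpa [eval_Mn] using h2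
  have e004 : c004 = 0 := by
    rw [hF] at h3; simpa [eval_Mn] using h3
  -- cubic-in-one-variable coefficients vanish
  have exy : ∀ t : ℝ, 0 ≤ c310 * t + c220 * t^2 + c130 * t^3 := by
    intro t
    have := hpsd ![1, t, 0]
    rw [hF] at this
    simp only [map_add, eval_Mn] at this
    simp only [Matrix.cons_val_zero, Matrix.cons_val_one, Matrix.head_cons,
      Matrix.cons_val_two, Matrix.tail_cons] at this
    rw [e400, e040] at this
    nlinarith [this]
  have exz : ∀ t : ℝ, 0 ≤ c301 * t + c202 * t^2 + c103 * t^3 := by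
    intro t
    have := hpsd ![1, 0, t]
    rw [hF] at this
    simp only [map_add, eval_Mn] at this
    simp only [Matrix.cons_val_zero, Matrix.cons_val_one, Matrix.head_cons,
      Matrix.cons_val_two, Matrix.tail_cons] at this
    rw [e400, e004] at this
    nlinarith [this]
  have eyz : ∀ t : ℝ, 0 ≤ c031 * t + c022 * t^2 + c013 * t^3 := by
    intro t
    have := hpsd ![0, 1, t]
    rw [hF] at this
    simp only [map_add, eval_Mn] at this
    simp only [Matrix.cons_val_zero, Matrix.cons_val_one, Matrix.head_cons,
      Matrix.cons_val_two, Matrix.tail_cons] at this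
    rw [e040, e004] at this
    nlinarith [this]
  have e310 : c310 = 0 := cubic_zero _ _ _ exy
  have e130 : c130 = 0 := cubic_zero' _ _ _ exy
  have e301 : c301 = 0 := cubic_zero _ _ _ exz
  have e103 : c103 = 0 := cubic_zero' _ _ _ exz
  have e031 : c031 = 0 := cubic_zero _ _ _ eyz
  have e013 : c013 = 0 := cubic_zero' _ _ _ eyz
  refine ⟨c220, c022, c202, c211, c121, c112, ?_⟩
  rw [hF, e400, e040, e004, e310, e130, e301, e103, e031, e013]
  simp only [monomial_zero, add_zero, zero_add]
  rw [← Mn_eq_monomial 2 2 0, ← Mn_eq_monomial 2 1 1, ← Mn_eq_monomial 2 0 2,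
    ← Mn_eq_monomial 1 2 1, ← Mn_eq_monomial 1 1 2, ← Mn_eq_monomial 0 2 2]
  ring
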